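/- Let L ⊆ I index linearly independent vectors f_i − f_0, and let L_t ⊆ L ∩ F_t be chosen so that {μ_i : i ∈ L_t} parametrize the family on F_t. If a linear combination Σ_i a_i μ_i^{(s)} has the same finite limit for every sequence θ^{(s)} with p_{θ^{(s)}} → p*, then that combination is a linear combination of the μ_i^{(s)} with i ∈ L_t only. In particular, if a_j ≠ 0 for some j ∉ L_t, then shifting μ_j by 1 (keeping other μ coordinates fixed) does not change the limiting distribution but changes the limit of the combination by a_j. -/

import Mathlib

open Filter

lemma exists_dual {J ι : Type} [Fintype J] [DecidableEq ι] (f : ι → (J → ℝ))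
    (hf : LinearIndependent ℝ f) (j : ι) :
    ∃ v : J → ℝ, ∀ i, (∑ j', v j' * f i j') = if i = j then 1 else 0 := by
  classical
  have hinj := hf.injective
  have hli : LinearIndepOn ℝ id (Set.range f) := (linearIndepOn_id_range_iff hinj).mpr hf
  let b := Module.Basis.extend hli
  have hmem : ∀ i, f i ∈ hli.extend (Set.subset_univ _) := fun i =>
    hli.subset_extend _ ⟨i, rfl⟩
  let φ : (J → ℝ) →ₗ[ℝ] ℝ := b.coord ⟨f j, hmem j⟩
  refine ⟨fun j' => φ (Pi.single j' 1), fun i => ?_⟩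
  have hx : φ (f i) = if i = j then 1 else 0 := by
    have : f i = b ⟨f i, hmem i⟩ := (Module.Basis.extend_apply_self hli ⟨f i, hmem i⟩).symm
    rw [this]
    simp only [φ, Module.Basis.coord_apply, Module.Basis.repr_self]
    rw [Finsupp.single_apply]
    by_cases h : i = j
    · subst h; simp
    · rw [if_neg h, if_neg]
      intro hc
      exact h (hinj (congrArg Subtype.val hc.symm)).symm
  rw [← hx]
  conv_rhs => rw [pi_eq_sum_univ (f i)]
  rw [map_sum]
  congr 1; ext j'
  rw [map_smul, smul_eq_mul, mul_comm]
  have : (fun j => if j' = j then (1:ℝ) else 0) = Pi.single j' 1 := by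
    ext k
    simp [Pi.single_apply, eq_comm]
  rw [this]

lemma gshift {I J : Type} [Fintype I] [Fintype J] (A : J → I → ℝ) (i0 : I)
    (θ v : J → ℝ) (i : I) :
    Real.exp (∑ j, (θ j + v j) * A j i -
        Real.log (∑ i', Real.exp (∑ j, (θ j + v j) * A j i')))
      = Real.exp (∑ j, θ j * A j i - Real.log (∑ i', Real.exp (∑ j, θ j * A j i')))
          * Real.exp (∑ j, v j * (A j i - A j i0))
        / ∑ i', Real.exp (∑ j, θ j * A j i' -
            Real.log (∑ i'', Real.exp (∑ j, θ j * A j i'')))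
          * Real.exp (∑ j, v j * (A j i' - A j i0)) := by
  have hpos : ∀ θ' : J → ℝ, (0:ℝ) < ∑ i', Real.exp (∑ j, θ' j * A j i') :=
    fun θ' => Finset.sum_pos (fun _ _ => Real.exp_pos _) ⟨i0, Finset.mem_univ _⟩
  have key : ∀ (θ' : J → ℝ) (i : I),
      Real.exp (∑ j, θ' j * A j i - Real.log (∑ i', Real.exp (∑ j, θ' j * A j i')))
        = Real.exp (∑ j, θ' j * A j i) / (∑ i', Real.exp (∑ j, θ' j * A j i')) := by
    intro θ' i
    rw [Real.exp_sub, Real.exp_log (hpos θ')]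
  have hadd : ∀ i, (∑ j, (θ j + v j) * A j i) = (∑ j, θ j * A j i) + ∑ j, v j * A j i := by
    intro i; rw [← Finset.sum_add_distrib]; congr 1; ext j; ring
  have hsub : ∀ i, (∑ j, v j * (A j i - A j i0))
      = (∑ j, v j * A j i) - ∑ j, v j * A j i0 := by
    intro i; rw [← Finset.sum_sub_distrib]; congr 1; ext j; ring
  simp only [key, hadd, hsub]
  have hterm : ∀ i' : I,
      Real.exp (∑ j, θ j * A j i') / (∑ i'', Real.exp (∑ j, θ j * A j i''))
          * Real.exp ((∑ j, v j * A j i') - ∑ j, v j * A j i0)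
        = Real.exp ((∑ j, θ j * A j i') + ∑ j, v j * A j i')
          / ((∑ i'', Real.exp (∑ j, θ j * A j i'')) * Real.exp (∑ j, v j * A j i0)) := by
    intro i'
    rw [Real.exp_sub, Real.exp_add, div_mul_div_comm]
  simp only [hterm]
  rw [← Finset.sum_div]
  have hZ2 : (0:ℝ) < ∑ i', Real.exp ((∑ j, θ j * A j i') + ∑ j, v j * A j i') :=
    Finset.sum_pos (fun _ _ => Real.exp_pos _) ⟨i0, Finset.mem_univ _⟩
  rw [Real.exp_sub, Real.exp_log hZ2]
  have h1 : ((∑ i', Real.exp (∑ j, θ j * A j i')) * Real.exp (∑ j, v j * A j i0)) ≠ 0 :=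
    ne_of_gt (mul_pos (hpos θ) (Real.exp_pos _))
  field_simp
  exact (div_self (ne_of_gt (hpos θ))).symm


/-- Let `0 = i0` be a base cell, `L ⊆ I` index linearly independent vectors
`f_i − f_0` spanning the same space as all of them, and let `L_t ⊆ L ∩ F_t` be such that
the `μ_i`, `i ∈ L_t`, parametrize the family on `F_t = supp p*` (i.e. the vectors
`f_i − f_0`, `i ∈ L_t`, span the same space as the `f_i − f_0` with `i ∈ F_t`, and `L`
extends `L_t` by elements outside `F_t`).  If the linear combination
`∑_{i∈L} a_i μ_i^{(s)}` has the same finite limit `c` for every sequence `θ^{(s)}` with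
`p_{θ^{(s)}} → p*`, then that combination only involves the `μ_i` with `i ∈ L_t`:
`a_j = 0` for every `j ∈ L \ L_t`. -/
theorem finite_limit_combinations {I J : Type} [Fintype I] [Fintype J]
    (A : J → I → ℝ) (i0 : I) (L Lt : Finset I) (hsub : Lt ⊆ L)
    (hLind : LinearIndependent ℝ (fun i : {x // x ∈ L} => fun j => A j i.1 - A j i0))
    (hLmax : Submodule.span ℝ (Set.range fun i : {x // x ∈ L} => fun j => A j i.1 - A j i0) =
      Submodule.span ℝ (Set.range fun i : I => fun j => A j i - A j i0))
    (pstar : I → ℝ) (h0 : pstar i0 ≠ 0)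
    (hLtF : ∀ i ∈ Lt, pstar i ≠ 0)
    (hext : ∀ i ∈ L, i ∉ Lt → pstar i = 0)
    (hspan : Submodule.span ℝ {x : J → ℝ | ∃ i ∈ Lt, x = fun j => A j i - A j i0} =
      Submodule.span ℝ {x : J → ℝ | ∃ i : I, pstar i ≠ 0 ∧ x = fun j => A j i - A j i0})
    (hreach : ∃ θs : ℕ → J → ℝ, ∀ i : I,
      Tendsto (fun s => Real.exp (∑ j, θs s j * A j i -
          Real.log (∑ i', Real.exp (∑ j, θs s j * A j i'))))
        atTop (nhds (pstar i)))
    (a : I → ℝ) (c : ℝ)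
    (hlim : ∀ θs : ℕ → J → ℝ,
      (∀ i : I, Tendsto (fun s => Real.exp (∑ j, θs s j * A j i -
          Real.log (∑ i', Real.exp (∑ j, θs s j * A j i'))))
        atTop (nhds (pstar i))) →
      Tendsto (fun s => ∑ i ∈ L, a i * ∑ j, θs s j * (A j i - A j i0)) atTop (nhds c)) :
    ∀ j ∈ L, j ∉ Lt → a j = 0 := by
  classical
  intro j hjL hjLt
  obtain ⟨θs, hθs⟩ := hreach
  -- the vectors f_i := f_i - f_0
  set fi : I → (J → ℝ) := fun i => fun j' => A j' i - A j' i0 with hfi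
  -- dual vector v
  obtain ⟨v, hv⟩ := exists_dual (fun i : {x // x ∈ L} => fi i.1) hLind ⟨j, hjL⟩
  have hvL : ∀ i (hi : i ∈ L), (∑ j', v j' * fi i j') = if i = j then 1 else 0 := by
    intro i hi
    rw [hv ⟨i, hi⟩]
    simp [Subtype.mk.injEq]
  -- linear functional x ↦ ∑ v * x
  let ψ : (J → ℝ) →ₗ[ℝ] ℝ :=
    { toFun := fun x => ∑ j', v j' * x j'
      map_add' := by intro x y; simp [mul_add, Finset.sum_add_distrib]
      map_smul' := by
        intro r x
        simp only [Pi.smul_apply, smul_eq_mul, RingHom.id_apply, Finset.mul_sum]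
        congr 1; ext j'; ring }
  -- c_i = 0 whenever pstar i ≠ 0
  have czero : ∀ i : I, pstar i ≠ 0 → (∑ j', v j' * fi i j') = 0 := by
    intro i hi
    have hmem : fi i ∈ Submodule.span ℝ
        {x : J → ℝ | ∃ i ∈ Lt, x = fun j => A j i - A j i0} := by
      rw [hspan]
      exact Submodule.subset_span ⟨i, hi, rfl⟩
    have hker : Submodule.span ℝ
        {x : J → ℝ | ∃ i ∈ Lt, x = fun j => A j i - A j i0} ≤ LinearMap.ker ψ := by
      rw [Submodule.span_le]
      rintro x ⟨i', hi', rfl⟩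
      have : i' ≠ j := fun h => hjLt (h ▸ hi')
      simpa [ψ, LinearMap.mem_ker, hfi, this] using hvL i' (hsub hi')
    have := hker hmem
    simpa [ψ, LinearMap.mem_ker] using this
  -- positivity and normalization facts
  have hpos : ∀ θ' : J → ℝ, (0:ℝ) < ∑ i', Real.exp (∑ j', θ' j' * A j' i') :=
    fun θ' => Finset.sum_pos (fun _ _ => Real.exp_pos _) ⟨i0, Finset.mem_univ _⟩
  have hsum1 : ∀ θ' : J → ℝ,
      (∑ i : I, Real.exp (∑ j', θ' j' * A j' i -
        Real.log (∑ i', Real.exp (∑ j', θ' j' * A j' i')))) = 1 := by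
    intro θ'
    have : ∀ i : I, Real.exp (∑ j', θ' j' * A j' i -
        Real.log (∑ i', Real.exp (∑ j', θ' j' * A j' i')))
        = Real.exp (∑ j', θ' j' * A j' i) / (∑ i', Real.exp (∑ j', θ' j' * A j' i')) := by
      intro i
      rw [Real.exp_sub, Real.exp_log (hpos θ')]
    simp only [this]
    rw [← Finset.sum_div, div_self (ne_of_gt (hpos θ'))]
  have hpsum : (∑ i : I, pstar i) = 1 := by
    have h1 : Tendsto (fun s => ∑ i : I, Real.exp (∑ j', θs s j' * A j' i -
        Real.log (∑ i', Real.exp (∑ j', θs s j' * A j' i'))))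
        atTop (nhds (∑ i : I, pstar i)) :=
      tendsto_finset_sum _ (fun i _ => hθs i)
    have h2 : (fun s => ∑ i : I, Real.exp (∑ j', θs s j' * A j' i -
        Real.log (∑ i', Real.exp (∑ j', θs s j' * A j' i')))) = fun _ => (1:ℝ) := by
      funext s; exact hsum1 (θs s)
    rw [h2] at h1
    exact tendsto_nhds_unique h1 tendsto_const_nhds
  -- the key: p* i * exp(c_i) = p* i for all i
  have hfix : ∀ i : I, pstar i * Real.exp (∑ j', v j' * (A j' i - A j' i0)) = pstar i := by
    intro i
    by_cases hi : pstar i = 0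
    · simp [hi]
    · rw [czero i hi, Real.exp_zero, mul_one]
  -- the shifted sequence also reaches pstar
  have hreach' : ∀ i : I,
      Tendsto (fun s => Real.exp (∑ j', (fun j'' => θs s j'' + v j'') j' * A j' i -
          Real.log (∑ i', Real.exp (∑ j', (fun j'' => θs s j'' + v j'') j' * A j' i'))))
        atTop (nhds (pstar i)) := by
    intro i
    have heq : (fun s => Real.exp (∑ j', (fun j'' => θs s j'' + v j'') j' * A j' i -
          Real.log (∑ i', Real.exp (∑ j', (fun j'' => θs s j'' + v j'') j' * A j' i'))))
        = fun s =>
          Real.exp (∑ j', θs s j' * A j' i -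
              Real.log (∑ i', Real.exp (∑ j', θs s j' * A j' i')))
            * Real.exp (∑ j', v j' * (A j' i - A j' i0))
          / ∑ i', Real.exp (∑ j', θs s j' * A j' i' -
              Real.log (∑ i'', Real.exp (∑ j', θs s j' * A j' i'')))
            * Real.exp (∑ j', v j' * (A j' i' - A j' i0)) := by
      funext s
      exact gshift A i0 (θs s) v i
    rw [heq]
    have hnum : Tendsto (fun s =>
        Real.exp (∑ j', θs s j' * A j' i -
            Real.log (∑ i', Real.exp (∑ j', θs s j' * A j' i')))
          * Real.exp (∑ j', v j' * (A j' i - A j' i0)))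
        atTop (nhds (pstar i)) := by
      have := (hθs i).mul_const (Real.exp (∑ j', v j' * (A j' i - A j' i0)))
      rwa [hfix i] at this
    have hden : Tendsto (fun s =>
        ∑ i', Real.exp (∑ j', θs s j' * A j' i' -
            Real.log (∑ i'', Real.exp (∑ j', θs s j' * A j' i'')))
          * Real.exp (∑ j', v j' * (A j' i' - A j' i0)))
        atTop (nhds 1) := by
      have h1 : Tendsto (fun s =>
          ∑ i', Real.exp (∑ j', θs s j' * A j' i' -
              Real.log (∑ i'', Real.exp (∑ j', θs s j' * A j' i'')))
            * Real.exp (∑ j', v j' * (A j' i' - A j' i0)))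
          atTop (nhds (∑ i' : I,
            pstar i' * Real.exp (∑ j', v j' * (A j' i' - A j' i0)))) :=
        tendsto_finset_sum _ (fun i' _ =>
          (hθs i').mul_const (Real.exp (∑ j', v j' * (A j' i' - A j' i0))))
      have h2 : (∑ i' : I, pstar i' * Real.exp (∑ j', v j' * (A j' i' - A j' i0))) = 1 := by
        calc (∑ i' : I, pstar i' * Real.exp (∑ j', v j' * (A j' i' - A j' i0)))
            = ∑ i' : I, pstar i' := by exact Finset.sum_congr rfl (fun i' _ => hfix i')
          _ = 1 := hpsum
      rwa [h2] at h1
    have := hnum.div hden one_ne_zero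
    rw [div_one] at this
    exact this
  -- apply hlim to both sequences
  have lim1 := hlim θs hθs
  have lim2 := hlim (fun s => fun j'' => θs s j'' + v j'') hreach'
  -- identity for the shifted combination
  have hcomb : (fun s => ∑ i ∈ L, a i * ∑ j', (fun j'' => θs s j'' + v j'') j' * (A j' i - A j' i0))
      = fun s => (∑ i ∈ L, a i * ∑ j', θs s j' * (A j' i - A j' i0)) + a j := by
    funext s
    have hterm : ∀ i ∈ L,
        a i * ∑ j', (θs s j' + v j') * (A j' i - A j' i0)
          = a i * ∑ j', θs s j' * (A j' i - A j' i0)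
            + a i * (if i = j then 1 else 0) := by
      intro i hi
      rw [← hvL i hi]
      have : (∑ j', (θs s j' + v j') * (A j' i - A j' i0))
          = (∑ j', θs s j' * (A j' i - A j' i0)) + ∑ j', v j' * (A j' i - A j' i0) := by
        rw [← Finset.sum_add_distrib]; congr 1; ext j'; ring
      rw [this]; ring
    rw [Finset.sum_congr rfl hterm, Finset.sum_add_distrib]
    congr 1
    simp only [mul_ite, mul_one, mul_zero]
    rw [Finset.sum_ite_eq' L j a]
    simp [hjL]
  rw [hcomb] at lim2
  have lim3 : Tendsto (fun s => (∑ i ∈ L, a i * ∑ j', θs s j' * (A j' i - A j' i0)) + a j)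
      atTop (nhds (c + a j)) := lim1.add_const (a j)
  have := tendsto_nhds_unique lim2 lim3
  linarith
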